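/- Let f : ℝⁿ → ℝ be twice continuously differentiable, φ : ℝⁿ → ℝ convex, F := f + φ. Fix x, x̂ ∈ ℝⁿ, d := x̂ − x, μ > 0 and a symmetric n×n matrix G such that G − ∇²f(x) ⪰ μI (positive semidefinite ordering). Define q(y) := f(x) + ⟨∇f(x), y − x⟩ + (1/2)⟨y − x, ∇²f(x)(y − x)⟩ + φ(y), q̂ likewise with G in place of ∇²f(x), pred := F(x) − q(x̂), ared := F(x) − F(x̂), and assume F(x) − q̂(x̂) ≥ 0. Then for every c ≤ 1 there exists a point ξ on the line segment between x and x̂ such that ared − c·pred ≥ (1/2)·((1 − c)μ − ‖∇²f(ξ) − ∇²f(x)‖)·‖d‖², where ‖·‖ is the operator norm on matrices. Moreover pred ≥ (F(x) − q̂(x̂)) + (μ/2)‖d‖² ≥ (μ/2)‖d‖². -/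

import Mathlib

open scoped RealInnerProductSpace

noncomputable section

set_option maxHeartbeats 1000000

/-- Let `F = f + φ` with `f` twice continuously differentiable (Hessian `hess`), `φ` convex,
`G − ∇²f(x) ⪰ μI`, `q`/`q̂` the quadratic models with `∇²f(x)`/`G`, `pred = F(x) − q(x̂)`,
`ared = F(x) − F(x̂)`, and `F(x) − q̂(x̂) ≥ 0`. Then for every `c ≤ 1` there is `ξ` on the
segment `[x, x̂]` with `ared − c·pred ≥ (1/2)((1−c)μ − ‖∇²f(ξ) − ∇²f(x)‖)‖d‖²`; moreover
`pred ≥ (F(x) − q̂(x̂)) + (μ/2)‖d‖² ≥ (μ/2)‖d‖²`. -/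
theorem stmt_6 {n : ℕ} (f φ : EuclideanSpace ℝ (Fin n) → ℝ)
    (hf : ContDiff ℝ 2 f) (hφ : ConvexOn ℝ Set.univ φ)
    (hess : EuclideanSpace ℝ (Fin n) → EuclideanSpace ℝ (Fin n) →L[ℝ] EuclideanSpace ℝ (Fin n))
    (hhess : ∀ y, HasFDerivAt (gradient f) (hess y) y)
    (F : EuclideanSpace ℝ (Fin n) → ℝ) (hF : ∀ y, F y = f y + φ y)
    (x xhat d : EuclideanSpace ℝ (Fin n)) (hd : d = xhat - x)
    (μ : ℝ) (hμ : 0 < μ)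
    (G : EuclideanSpace ℝ (Fin n) →L[ℝ] EuclideanSpace ℝ (Fin n))
    (hGsym : ∀ u v, ⟪G u, v⟫ = ⟪u, G v⟫)
    (hGμ : ∀ u, μ * ‖u‖ ^ 2 ≤ ⟪(G - hess x) u, u⟫)
    (q qhat : EuclideanSpace ℝ (Fin n) → ℝ)
    (hq : ∀ y, q y = f x + ⟪gradient f x, y - x⟫
        + (1 / 2) * ⟪y - x, hess x (y - x)⟫ + φ y)
    (hqhat : ∀ y, qhat y = f x + ⟪gradient f x, y - x⟫
        + (1 / 2) * ⟪y - x, G (y - x)⟫ + φ y)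
    (pred ared : ℝ) (hpred : pred = F x - q xhat) (hared : ared = F x - F xhat)
    (hqhat0 : 0 ≤ F x - qhat xhat) :
    (∀ c ≤ (1 : ℝ), ∃ ξ ∈ segment ℝ x xhat,
        (1 / 2) * ((1 - c) * μ - ‖hess ξ - hess x‖) * ‖d‖ ^ 2 ≤ ared - c * pred) ∧
    (F x - qhat xhat) + (μ / 2) * ‖d‖ ^ 2 ≤ pred ∧ (μ / 2) * ‖d‖ ^ 2 ≤ pred := by
  have hdiff : Differentiable ℝ f := hf.differentiable two_ne_zero
  set L : ℝ → EuclideanSpace ℝ (Fin n) := fun t => x + t • d with hLdef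
  -- derivative of the line map
  have hLd : ∀ t : ℝ, HasDerivAt L d t := by
    intro t
    have h1 : HasDerivAt (fun s : ℝ => s • d) ((1 : ℝ) • d) t :=
      (hasDerivAt_id t).smul_const d
    simpa [hLdef] using h1.const_add x
  -- first derivative of f along the line
  have hg1 : ∀ t : ℝ, HasDerivAt (fun s => f (L s)) ⟪gradient f (L t), d⟫ t := by
    intro t
    have hgrad : HasGradientAt f (gradient f (L t)) (L t) :=
      (hdiff (L t)).hasGradientAt
    have hfd := hgrad.hasFDerivAt
    have := hfd.comp_hasDerivAt t (hLd t)
    simpa [Function.comp_def] using this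
  -- second derivative of f along the line
  have hg2 : ∀ t : ℝ, HasDerivAt (fun s => ⟪gradient f (L s), d⟫)
      ⟪hess (L t) d, d⟫ t := by
    intro t
    have hgl : HasDerivAt (fun s => gradient f (L s)) (hess (L t) d) t := by
      have := (hhess (L t)).comp_hasDerivAt t (hLd t)
      simpa [Function.comp_def] using this
    have := hgl.inner ℝ (hasDerivAt_const t d)
    simpa [real_inner_comm] using this
  -- Taylor with Lagrange remainder via Cauchy MVT
  have htaylor : ∃ t ∈ Set.Ioo (0 : ℝ) 1,
      f xhat - f x - ⟪gradient f x, d⟫ = (1 / 2) * ⟪hess (L t) d, d⟫ := by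
    set Fn : ℝ → ℝ := fun t => f (L 1) - f (L t) - (1 - t) * ⟪gradient f (L t), d⟫ with hFn
    set Fn' : ℝ → ℝ := fun t => -((1 - t) * ⟪hess (L t) d, d⟫) with hFn'
    set K : ℝ → ℝ := fun t => (1 - t) ^ 2 with hK
    set K' : ℝ → ℝ := fun t => -(2 * (1 - t)) with hK'
    have hFd : ∀ t : ℝ, HasDerivAt Fn (Fn' t) t := by
      intro t
      have h1 : HasDerivAt (fun s : ℝ => (1 - s)) (-1 : ℝ) t := by
        simpa using (hasDerivAt_id t).const_sub 1
      have h2 := h1.mul (hg2 t)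
      have h3 := ((hg1 t).const_sub (f (L 1))).sub h2
      exact h3.congr_deriv (by simp only [Fn']; ring)
    have hKd : ∀ t : ℝ, HasDerivAt K (K' t) t := by
      intro t
      have h1 : HasDerivAt (fun s : ℝ => (1 - s)) (-1 : ℝ) t := by
        simpa using (hasDerivAt_id t).const_sub 1
      have := h1.pow 2
      exact this.congr_deriv (by simp only [K']; ring)
    obtain ⟨t, ht, heq⟩ := exists_ratio_hasDerivAt_eq_ratio_slope Fn Fn'
      (by norm_num : (0:ℝ) < 1)
      (fun s _ => (hFd s).continuousAt.continuousWithinAt)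
      (fun s _ => hFd s) K K'
      (fun s _ => (hKd s).continuousAt.continuousWithinAt)
      (fun s _ => hKd s)
    refine ⟨t, ht, ?_⟩
    have ht1 : (1 : ℝ) - t ≠ 0 := by have := ht.2; intro h; linarith [sub_eq_zero.mp h]
    have hL0 : L 0 = x := by simp [hLdef]
    have hL1 : L 1 = xhat := by simp [hLdef, hd]
    simp only [Fn, Fn', K, K', hL0, hL1] at heq
    have heq' : (1 - t) * ⟪hess (L t) d, d⟫ =
        (f xhat - f x - ⟪gradient f x, d⟫) * (2 * (1 - t)) := by
      nlinarith [heq]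
    have := mul_left_cancel₀ ht1 (by linarith [heq'] :
      (1 - t) * ⟪hess (L t) d, d⟫ = (1 - t) * (2 * (f xhat - f x - ⟪gradient f x, d⟫)))
    linarith
  obtain ⟨t, ht, htay⟩ := htaylor
  set ξ := L t with hξ
  have hseg : ξ ∈ segment ℝ x xhat := by
    rw [segment_eq_image']
    exact ⟨t, ⟨le_of_lt ht.1, le_of_lt ht.2⟩, by simp [hξ, hLdef, hd]⟩
  -- basic quantities
  have hxhx : xhat - x = d := by rw [hd]
  have hqx : q xhat = f x + ⟪gradient f x, d⟫ + (1 / 2) * ⟪d, hess x d⟫ + φ xhat := by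
    rw [hq]; rw [hxhx]
  have hqhx : qhat xhat = f x + ⟪gradient f x, d⟫ + (1 / 2) * ⟪d, G d⟫ + φ xhat := by
    rw [hqhat]; rw [hxhx]
  -- pred lower bounds
  have hGd : μ * ‖d‖ ^ 2 ≤ ⟪d, G d⟫ - ⟪d, hess x d⟫ := by
    have := hGμ d
    have hsub : ⟪(G - hess x) d, d⟫ = ⟪d, G d⟫ - ⟪d, hess x d⟫ := by
      rw [ContinuousLinearMap.sub_apply, inner_sub_left, real_inner_comm (G d) d,
        real_inner_comm ((hess x) d) d]
    linarith [hsub ▸ this]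
  have hpred2 : (F x - qhat xhat) + (μ / 2) * ‖d‖ ^ 2 ≤ pred := by
    rw [hpred, hqx]
    rw [hqhx] at hqhat0 ⊢
    nlinarith [hGd]
  have hpred3 : (μ / 2) * ‖d‖ ^ 2 ≤ pred := by
    nlinarith [hpred2, hqhat0]
  refine ⟨?_, hpred2, hpred3⟩
  intro c hc
  refine ⟨ξ, hseg, ?_⟩
  -- bound the quadratic form by the operator norm
  have hopbd : |⟪(hess ξ - hess x) d, d⟫| ≤ ‖hess ξ - hess x‖ * ‖d‖ ^ 2 := by
    calc |⟪(hess ξ - hess x) d, d⟫| ≤ ‖(hess ξ - hess x) d‖ * ‖d‖ :=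
          abs_real_inner_le_norm _ _
      _ ≤ ‖hess ξ - hess x‖ * ‖d‖ * ‖d‖ := by
          gcongr; exact ContinuousLinearMap.le_opNorm _ _
      _ = ‖hess ξ - hess x‖ * ‖d‖ ^ 2 := by ring
  have hQ : q xhat - F xhat = -(1 / 2) * ⟪(hess ξ - hess x) d, d⟫ := by
    have hsub2 : ⟪(hess ξ - hess x) d, d⟫ = ⟪hess ξ d, d⟫ - ⟪d, hess x d⟫ := by
      rw [ContinuousLinearMap.sub_apply, inner_sub_left, real_inner_comm ((hess x) d) d]
    rw [hqx, hF]
    rw [hsub2]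
    have := htay
    linarith
  have hQ' : -(1 / 2) * (‖hess ξ - hess x‖ * ‖d‖ ^ 2) ≤ q xhat - F xhat := by
    rw [hQ]
    have := (abs_le.mp hopbd).2
    linarith
  have hsplit : ared - c * pred = (q xhat - F xhat) + (1 - c) * pred := by
    rw [hared, hpred]; ring
  rw [hsplit]
  have h1c : 0 ≤ 1 - c := by linarith
  have : (1 - c) * ((μ / 2) * ‖d‖ ^ 2) ≤ (1 - c) * pred :=
    mul_le_mul_of_nonneg_left hpred3 h1c
  nlinarith [hQ', this]
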